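/- Let π ∈ S_n be a Schröder permutation and k ≥ 3. Then π avoids the pattern 213⋯k (the permutation 2,1,3,4,…,k of {1,…,k}) if and only if every element (i,j) ∈ E(π) satisfies i + j ≥ n + 3 − k + ρ(i,j). -/

import Mathlib

/-- `π` contains the pattern `τ`: there is a strictly increasing choice of positions
whose values appear in the same relative order as `τ`. -/
def Contains {n k : ℕ} (π : Equiv.Perm (Fin n)) (τ : Equiv.Perm (Fin k)) : Prop :=
  ∃ f : Fin k → Fin n, StrictMono f ∧ ∀ a b : Fin k, τ a < τ b ↔ π (f a) < π (f b)

/-- `π` avoids the pattern `τ`. -/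
def Avoids {n k : ℕ} (π : Equiv.Perm (Fin n)) (τ : Equiv.Perm (Fin k)) : Prop :=
  ¬ Contains π τ

/-- The pattern 1243 (in one-line notation), as a permutation of `Fin 4` (0-based). -/
def pat1243 : Equiv.Perm (Fin 4) := Equiv.swap 2 3

/-- The pattern 2143 (in one-line notation), as a permutation of `Fin 4` (0-based). -/
def pat2143 : Equiv.Perm (Fin 4) := Equiv.swap 0 1 * Equiv.swap 2 3

/-- A Schröder permutation avoids both 1243 and 2143. -/
def Schroeder {n : ℕ} (π : Equiv.Perm (Fin n)) : Prop :=
  Avoids π pat1243 ∧ Avoids π pat2143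

/-- The diagram of `π` (0-based coordinates): squares `(i,j)` with `π i > j` and
`π⁻¹ j > i`. -/
def Diagram {n : ℕ} (π : Equiv.Perm (Fin n)) : Set (Fin n × Fin n) :=
  {p | p.2 < π p.1 ∧ p.1 < π.symm p.2}

/-- The essential set of `π`: squares of the diagram whose east and south neighbours
are not in the diagram. -/
def EssSet {n : ℕ} (π : Equiv.Perm (Fin n)) : Set (Fin n × Fin n) :=
  {p | p ∈ Diagram π ∧
    (∀ i' : Fin n, (i' : ℕ) = (p.1 : ℕ) + 1 → (i', p.2) ∉ Diagram π) ∧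
    (∀ j' : Fin n, (j' : ℕ) = (p.2 : ℕ) + 1 → (p.1, j') ∉ Diagram π)}

/-- The rank of a square `(i,j)`: the number of positions `k < i` with `π k < j`. -/
def rank {n : ℕ} (π : Equiv.Perm (Fin n)) (p : Fin n × Fin n) : ℕ :=
  (Finset.univ.filter fun k : Fin n => k < p.1 ∧ π k < p.2).card

/-! ### Auxiliary definitions -/

/-- Positions after `d` whose value exceeds `π c`. -/
def Tset {n : ℕ} (π : Equiv.Perm (Fin n)) (c d : Fin n) : Finset (Fin n) :=
  Finset.univ.filter fun p => d < p ∧ π c < π p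

/-- Positions weakly after `i` whose value is weakly at least `j`. -/
def SEset {n : ℕ} (π : Equiv.Perm (Fin n)) (i j : Fin n) : Finset (Fin n) :=
  Finset.univ.filter fun p => i ≤ p ∧ j ≤ π p

lemma SE_rank {n : ℕ} (π : Equiv.Perm (Fin n)) (p : Fin n × Fin n) :
    (SEset π p.1 p.2).card + (p.1 : ℕ) + (p.2 : ℕ) = n + rank π p := by
  obtain ⟨i, j⟩ := p
  set S1 : Finset (Fin n) := Finset.univ.filter fun q : Fin n => q < i with hS1
  set S2 : Finset (Fin n) := Finset.univ.filter fun q : Fin n => π q < j with hS2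
  have h1 : S1.card = (i : ℕ) := by
    have h : S1 = Finset.Iio i := by ext q; simp [hS1]
    rw [h]; exact Fin.card_Iio i
  have h2 : S2.card = (j : ℕ) := by
    have h : S2.card = (Finset.univ.filter fun v : Fin n => v < j).card := by
      apply Finset.card_equiv π
      intro q
      simp [hS2]
    rw [h]
    have h' : (Finset.univ.filter fun v : Fin n => v < j) = Finset.Iio j := by ext q; simp
    rw [h']; exact Fin.card_Iio j
  have hU : (S1 ∪ S2).card + (S1 ∩ S2).card = S1.card + S2.card :=
    Finset.card_union_add_card_inter _ _
  have hI : rank π (i, j) = (S1 ∩ S2).card := by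
    rw [← Finset.filter_and]; rfl
  have hC : SEset π i j = (S1 ∪ S2)ᶜ := by
    ext q
    simp [SEset, hS1, hS2, not_or, not_lt]
  have hcompl : (S1 ∪ S2).card + (S1 ∪ S2)ᶜ.card = n := by
    rw [Finset.card_add_card_compl]; simp
  show (SEset π i j).card + (i : ℕ) + (j : ℕ) = n + rank π (i, j)
  rw [hC, hI]
  omega

/-! ### From an essential cell to an inversion -/

lemma inversion_of_essential {n : ℕ} (π : Equiv.Perm (Fin n)) (p : Fin n × Fin n)
    (hp : p ∈ EssSet π) :
    ∃ c d : Fin n, c < d ∧ π d < π c ∧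
      (SEset π p.1 p.2).card ≤ (Tset π c d).card + 2 := by
  obtain ⟨i, j⟩ := p
  obtain ⟨⟨hj, hi⟩, hSo, hEa⟩ := hp
  simp only at hj hi hSo hEa
  set b := π.symm j with hb
  have hπb : π b = j := Equiv.apply_symm_apply π j
  have hin : (i : ℕ) < (b : ℕ) := hi
  have hji : (j : ℕ) < (π i : ℕ) := hj
  have hi1 : (i : ℕ) + 1 < n := by have := b.isLt; omega
  set i1 : Fin n := ⟨(i : ℕ) + 1, hi1⟩ with hi1d
  have hi1v : (i1 : ℕ) = (i : ℕ) + 1 := rfl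
  have hSo' : (π i1 : ℕ) ≤ (j : ℕ) := by
    have h := hSo i1 rfl
    simp only [Diagram, Set.mem_setOf_eq, not_and, not_lt] at h
    by_cases hcc : j < π i1
    · have hble : (b : ℕ) ≤ (i1 : ℕ) := h hcc
      have hbeq : b = i1 := Fin.ext (by omega)
      have : (π i1 : ℕ) = (j : ℕ) := by rw [← hbeq, hπb]
      omega
    · exact not_lt.mp (fun hcon => hcc (Fin.lt_def.mpr hcon))
  have hj1 : (j : ℕ) + 1 < n := by have := (π i).isLt; omega
  set j1 : Fin n := ⟨(j : ℕ) + 1, hj1⟩ with hj1d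
  have hj1v : (j1 : ℕ) = (j : ℕ) + 1 := rfl
  set c := π.symm j1 with hc
  have hπc : π c = j1 := Equiv.apply_symm_apply π j1
  have hci : (c : ℕ) ≤ (i : ℕ) := by
    have h := hEa j1 rfl
    simp only [Diagram, Set.mem_setOf_eq, not_and, not_lt] at h
    by_cases hx : j1 < π i
    · exact h hx
    · have hxv : (π i : ℕ) ≤ (j : ℕ) + 1 := not_lt.mp hx
      have hpi : π i = j1 := Fin.ext (by omega)
      have hceq : c = i := by rw [hc, Equiv.symm_apply_eq]; exact hpi.symm
      rw [hceq]
  refine ⟨c, i1, Fin.lt_def.mpr (by omega), Fin.lt_def.mpr ?_, ?_⟩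
  · rw [hπc]; omega
  · -- SEset \ {i, b} ⊆ Tset c i1
    have hiS : i ∈ SEset π i j := by
      simp only [SEset, Finset.mem_filter, Finset.mem_univ, true_and]
      exact ⟨le_refl _, le_of_lt hj⟩
    have hbS : b ∈ SEset π i j := by
      simp only [SEset, Finset.mem_filter, Finset.mem_univ, true_and]
      exact ⟨le_of_lt (Fin.lt_def.mpr hin), le_of_eq hπb.symm⟩
    have hib : i ≠ b := fun h => by rw [h] at hin; omega
    have hsub : SEset π i j \ {i, b} ⊆ Tset π c i1 := by
      intro q hq
      simp only [Finset.mem_sdiff, Finset.mem_insert, Finset.mem_singleton, not_or] at hq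
      obtain ⟨hqS, hqi, hqb⟩ := hq
      simp only [SEset, Finset.mem_filter, Finset.mem_univ, true_and] at hqS
      obtain ⟨hiq, hjq⟩ := hqS
      have hiq' : (i : ℕ) < (q : ℕ) := by
        rcases lt_or_eq_of_le (Fin.le_def.mp hiq) with h | h
        · exact h
        · exact absurd (Fin.ext h).symm hqi
      have hvq : (j : ℕ) < (π q : ℕ) := by
        rcases lt_or_eq_of_le (Fin.le_def.mp hjq) with h | h
        · exact h
        · exfalso
          apply hqb
          apply Equiv.injective π
          rw [hπb]
          exact (Fin.ext h).symm
      have hvq2 : (j : ℕ) + 1 < (π q : ℕ) := by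
        rcases Nat.lt_or_ge ((j : ℕ) + 1) (π q : ℕ) with h | h
        · exact h
        · exfalso
          have hqc : q = c := by
            apply Equiv.injective π
            rw [hπc]
            exact Fin.ext (by omega)
          have : (q : ℕ) = (c : ℕ) := by rw [hqc]
          omega
      have hq1 : (i : ℕ) + 1 < (q : ℕ) := by
        rcases Nat.lt_or_ge ((i : ℕ) + 1) (q : ℕ) with h | h
        · exact h
        · exfalso
          have hqe : q = i1 := Fin.ext (by omega)
          have : (π q : ℕ) ≤ (j : ℕ) := by rw [hqe]; exact hSo'
          omega
      simp only [Tset, Finset.mem_filter, Finset.mem_univ, true_and]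
      refine ⟨Fin.lt_def.mpr (by omega), Fin.lt_def.mpr ?_⟩
      rw [hπc]
      omega
    have hpair : ({i, b} : Finset (Fin n)) ⊆ SEset π i j := by
      intro q hq
      simp only [Finset.mem_insert, Finset.mem_singleton] at hq
      rcases hq with h | h <;> subst h
      exacts [hiS, hbS]
    have hcard2 : ({i, b} : Finset (Fin n)).card = 2 := Finset.card_pair hib
    have h3 := Finset.card_sdiff_add_card_eq_card hpair
    have hle := Finset.card_le_card hsub
    show (SEset π i j).card ≤ (Tset π c i1).card + 2
    omega

/-! ### From an inversion to an essential cell -/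

lemma essential_of_inversion {n : ℕ} (π : Equiv.Perm (Fin n)) {c d : Fin n}
    (hcd : c < d) (hv : π d < π c) :
    ∃ q ∈ EssSet π, (Tset π c d).card + 2 ≤ (SEset π q.1 q.2).card := by
  classical
  set F : Finset (Fin n) := Finset.univ.filter fun q => q < d ∧ π d < π q with hF
  have hcF : c ∈ F := by
    simp only [hF, Finset.mem_filter, Finset.mem_univ, true_and]
    exact ⟨hcd, hv⟩
  have hFne : F.Nonempty := ⟨c, hcF⟩
  set i := F.max' hFne with hidef
  have hiF : i ∈ F := F.max'_mem hFne
  have hid : (i : ℕ) < (d : ℕ) := (Finset.mem_filter.mp hiF).2.1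
  have hvi : (π d : ℕ) < (π i : ℕ) := (Finset.mem_filter.mp hiF).2.2
  have hci : (c : ℕ) ≤ (i : ℕ) := F.le_max' c hcF
  have hi1 : (i : ℕ) + 1 < n := by have := d.isLt; omega
  set i1 : Fin n := ⟨(i : ℕ) + 1, hi1⟩ with hi1d
  have hπi1 : (π i1 : ℕ) ≤ (π d : ℕ) := by
    by_cases h : i1 = d
    · rw [h]
    · have hlt : i1 < d := by
        refine Fin.lt_def.mpr (lt_of_le_of_ne hid ?_)
        intro hh
        exact h (Fin.ext hh)
      by_contra hcon
      push_neg at hcon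
      have hmem : i1 ∈ F := by
        simp only [hF, Finset.mem_filter, Finset.mem_univ, true_and]
        exact ⟨hlt, Fin.lt_def.mpr hcon⟩
      have := F.le_max' i1 hmem
      have : (i : ℕ) + 1 ≤ (i : ℕ) := this
      omega
  set V : Finset (Fin n) := Finset.univ.filter
    (fun v : Fin n => π d ≤ v ∧ ((π.symm v : ℕ) ≤ (i : ℕ) ∨ π i ≤ v)) with hV
  have hcV : π c ∈ V := by
    simp only [hV, Finset.mem_filter, Finset.mem_univ, true_and, Equiv.symm_apply_apply]
    exact ⟨le_of_lt hv, Or.inl hci⟩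
  have hVne : V.Nonempty := ⟨π c, hcV⟩
  set m := V.min' hVne with hmdef
  have hmV : m ∈ V := V.min'_mem hVne
  have hmle : (m : ℕ) ≤ (π c : ℕ) := V.min'_le _ hcV
  have hmprop := (Finset.mem_filter.mp hmV).2
  have hdm : (π d : ℕ) < (m : ℕ) := by
    rcases lt_or_eq_of_le (Fin.le_def.mp hmprop.1) with h | h
    · exact h
    · exfalso
      have hmeq : m = π d := Fin.ext h.symm
      rcases hmprop.2 with h2 | h2
      · rw [hmeq] at h2
        simp only [Equiv.symm_apply_apply] at h2
        omega
      · have : (π i : ℕ) ≤ (m : ℕ) := h2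
        omega
  have hbelow : ∀ v : Fin n, (π d : ℕ) ≤ (v : ℕ) → (v : ℕ) < (m : ℕ) →
      (i : ℕ) < (π.symm v : ℕ) ∧ (v : ℕ) < (π i : ℕ) := by
    intro v h1 h2
    by_contra hcon
    push_neg at hcon
    have hvV : v ∈ V := by
      simp only [hV, Finset.mem_filter, Finset.mem_univ, true_and]
      refine ⟨Fin.le_def.mpr h1, ?_⟩
      by_cases hx : (i : ℕ) < (π.symm v : ℕ)
      · exact Or.inr (Fin.le_def.mpr (hcon hx))
      · exact Or.inl (not_lt.mp hx)
    have := V.min'_le v hvV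
    have : (m : ℕ) ≤ (v : ℕ) := this
    omega
  have hm1 : 1 ≤ (m : ℕ) := by omega
  have hmn : (m : ℕ) - 1 < n := by have := m.isLt; omega
  set J : Fin n := ⟨(m : ℕ) - 1, hmn⟩ with hJd
  have hJv : (J : ℕ) = (m : ℕ) - 1 := rfl
  obtain ⟨hJ1, hJ2⟩ := hbelow J (by omega) (by omega)
  refine ⟨(i, J), ⟨⟨Fin.lt_def.mpr hJ2, Fin.lt_def.mpr hJ1⟩, ?_, ?_⟩, ?_⟩
  · -- south neighbour
    intro i' hi'
    have : i' = i1 := Fin.ext hi'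
    subst this
    simp only [Diagram, Set.mem_setOf_eq, not_and, not_lt]
    intro hcon
    exfalso
    have : (J : ℕ) < (π i1 : ℕ) := hcon
    omega
  · -- east neighbour
    intro j' hj'
    have hj'' : (j' : ℕ) = (J : ℕ) + 1 := hj'
    have : j' = m := Fin.ext (by omega)
    subst this
    simp only [Diagram, Set.mem_setOf_eq, not_and, not_lt]
    intro hcon
    rcases hmprop.2 with h2 | h2
    · exact Fin.le_def.mpr h2
    · exfalso
      have : (m : ℕ) < (π i : ℕ) := hcon
      have : (π i : ℕ) ≤ (m : ℕ) := h2
      omega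
  · -- cardinality
    set b' := π.symm J with hb'
    have hπb' : π b' = J := Equiv.apply_symm_apply π J
    have hsub : insert i (insert b' (Tset π c d)) ⊆ SEset π i J := by
      intro q hq
      simp only [Finset.mem_insert] at hq
      simp only [SEset, Finset.mem_filter, Finset.mem_univ, true_and]
      rcases hq with h | h | h
      · subst h
        exact ⟨le_refl _, le_of_lt (Fin.lt_def.mpr hJ2)⟩
      · subst h
        exact ⟨le_of_lt (Fin.lt_def.mpr hJ1), le_of_eq hπb'.symm⟩
      · simp only [Tset, Finset.mem_filter, Finset.mem_univ, true_and] at h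
        obtain ⟨hdq, hcq⟩ := h
        have hdq' : (d : ℕ) < (q : ℕ) := hdq
        have hcq' : (π c : ℕ) < (π q : ℕ) := hcq
        exact ⟨Fin.le_def.mpr (by omega), Fin.le_def.mpr (by omega)⟩
    have hbT : b' ∉ Tset π c d := by
      simp only [Tset, Finset.mem_filter, Finset.mem_univ, true_and, not_and]
      intro _
      intro hcon
      have : (π c : ℕ) < (π b' : ℕ) := hcon
      rw [hπb'] at this
      omega
    have hiT : i ∉ insert b' (Tset π c d) := by
      simp only [Finset.mem_insert, not_or]
      constructor
      · intro h
        rw [h] at hJ1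
        omega
      · simp only [Tset, Finset.mem_filter, Finset.mem_univ, true_and, not_and]
        intro h
        have : (d : ℕ) < (i : ℕ) := h
        omega
    have hcard : (insert i (insert b' (Tset π c d))).card = (Tset π c d).card + 2 := by
      rw [Finset.card_insert_of_notMem hiT, Finset.card_insert_of_notMem hbT]
    calc (Tset π c d).card + 2 = (insert i (insert b' (Tset π c d))).card := hcard.symm
      _ ≤ (SEset π i J).card := Finset.card_le_card hsub

lemma schroeder_mono {n : ℕ} {π : Equiv.Perm (Fin n)} (hπ : Schroeder π) {c d p q : Fin n}
    (h1 : c < d) (h2 : d < p) (h3 : p < q)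
    (hdc : π d < π c) (hcp : π c < π p) (hcq : π c < π q) : π p < π q := by
  by_contra hcon
  have hqp : (π q : ℕ) < (π p : ℕ) := by
    rcases lt_or_eq_of_le (Fin.le_def.mp (not_lt.mp hcon)) with h | h
    · exact h
    · exact absurd (π.injective (Fin.ext h.symm)) (Fin.ne_of_lt h3)
  apply hπ.2
  have v1 : (π d : ℕ) < (π c : ℕ) := hdc
  have v2 : (π c : ℕ) < (π q : ℕ) := hcq
  have n1 : (c : ℕ) < (d : ℕ) := h1
  have n2 : (d : ℕ) < (p : ℕ) := h2
  have n3 : (p : ℕ) < (q : ℕ) := h3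
  refine ⟨fun a => if a.val = 0 then c else if a.val = 1 then d else if a.val = 2 then p else q,
    ?_, ?_⟩
  · intro x y hxy
    have hxy' : (x : ℕ) < (y : ℕ) := hxy
    fin_cases x <;> fin_cases y <;> simp_all <;>
      first
        | exact Fin.lt_def.mpr (by omega)
        | omega
  · intro a b
    fin_cases a <;> fin_cases b <;>
      first
        | exact iff_of_true (by decide) (Fin.lt_def.mpr (by norm_num <;> omega))
        | exact iff_of_false (by decide) (fun hlt => by
            have := Fin.lt_def.mp hlt
            norm_num at this <;> omega)

lemma contains_of_inversion {n : ℕ} {π : Equiv.Perm (Fin n)} (hπ : Schroeder π) {k : ℕ}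
    (hk : 3 ≤ k) {c d : Fin n} (hcd : c < d) (hv : π d < π c)
    (hT : k - 2 ≤ (Tset π c d).card) :
    Contains π (Equiv.swap (⟨0, by linarith⟩ : Fin k) ⟨1, by linarith⟩) := by
  obtain ⟨S, hST, hcard⟩ := Finset.exists_subset_card_eq hT
  set g := S.orderEmbOfFin hcard with hg
  have hgmem : ∀ a : Fin (k - 2), d < g a ∧ π c < π (g a) := by
    intro a
    have h := hST (S.orderEmbOfFin_mem hcard a)
    simpa [Tset] using h
  have hgmono : ∀ a b : Fin (k - 2), a < b → (π (g a) : ℕ) < (π (g b) : ℕ) := by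
    intro a b hab
    have := schroeder_mono hπ hcd (hgmem a).1 (g.strictMono hab) hv (hgmem a).2 (hgmem b).2
    exact this
  have hnk : ∀ a : Fin k, (a : ℕ) ≠ 0 → (a : ℕ) ≠ 1 → (a : ℕ) - 2 < k - 2 := by
    intro a h0 h1; have := a.isLt; omega
  set F : Fin k → Fin n := fun a =>
    if h0 : (a : ℕ) = 0 then c else if h1 : (a : ℕ) = 1 then d
    else g ⟨(a : ℕ) - 2, hnk a h0 h1⟩ with hF
  have hF0 : ∀ a : Fin k, (a : ℕ) = 0 → F a = c := by intro a h; simp [hF, h]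
  have hF1 : ∀ a : Fin k, (a : ℕ) = 1 → F a = d := by intro a h; simp [hF, h]
  have hF2 : ∀ (a : Fin k) (h2 : 2 ≤ (a : ℕ)), F a = g ⟨(a : ℕ) - 2, by have := a.isLt; omega⟩ := by
    intro a h2
    simp only [hF]
    rw [dif_neg (by omega), dif_neg (by omega)]
  -- value facts
  have hvc : (π d : ℕ) < (π c : ℕ) := hv
  have hvF2 : ∀ (a : Fin k), 2 ≤ (a : ℕ) → (π c : ℕ) < (π (F a) : ℕ) := by
    intro a h2
    rw [hF2 a h2]
    exact (hgmem _).2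
  have hdF2 : ∀ (a : Fin k), 2 ≤ (a : ℕ) → (π d : ℕ) < (π (F a) : ℕ) := by
    intro a h2
    exact lt_trans hvc (hvF2 a h2)
  have hcd' : (c : ℕ) < (d : ℕ) := hcd
  have hposF2 : ∀ (a : Fin k), 2 ≤ (a : ℕ) → (d : ℕ) < (F a : ℕ) := by
    intro a h2
    rw [hF2 a h2]
    exact (hgmem _).1
  have hF2mono : ∀ (a b : Fin k), 2 ≤ (a : ℕ) → 2 ≤ (b : ℕ) → (a : ℕ) < (b : ℕ) →
      (π (F a) : ℕ) < (π (F b) : ℕ) := by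
    intro a b ha hb hab
    rw [hF2 a ha, hF2 b hb]
    exact hgmono _ _ (by simp only [Fin.mk_lt_mk]; omega)
  have hF2mono' : ∀ (a b : Fin k), 2 ≤ (a : ℕ) → 2 ≤ (b : ℕ) →
      ((π (F a) : ℕ) < (π (F b) : ℕ) ↔ (a : ℕ) < (b : ℕ)) := by
    intro a b ha hb
    constructor
    · intro h
      rcases lt_trichotomy (a : ℕ) (b : ℕ) with hx | hx | hx
      · exact hx
      · exfalso; rw [show a = b from Fin.ext hx] at h; omega
      · exfalso; have := hF2mono b a hb ha hx; omega
    · exact hF2mono a b ha hb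
  -- swap facts
  set e0 : Fin k := ⟨0, by omega⟩ with he0
  set e1 : Fin k := ⟨1, by omega⟩ with he1
  have he0v : (e0 : ℕ) = 0 := rfl
  have he1v : (e1 : ℕ) = 1 := rfl
  set s := Equiv.swap e0 e1 with hs
  have hs0 : s e0 = e1 := Equiv.swap_apply_left _ _
  have hs1 : s e1 = e0 := Equiv.swap_apply_right _ _
  have hsval0 : ∀ x : Fin k, (x : ℕ) = 0 → ((s x : Fin k) : ℕ) = 1 := by
    intro x hx
    have : x = e0 := Fin.ext (by rw [he0v, hx])
    rw [this, hs0, he1v]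
  have hsval1 : ∀ x : Fin k, (x : ℕ) = 1 → ((s x : Fin k) : ℕ) = 0 := by
    intro x hx
    have : x = e1 := Fin.ext (by rw [he1v, hx])
    rw [this, hs1, he0v]
  have hsval2 : ∀ x : Fin k, 2 ≤ (x : ℕ) → ((s x : Fin k) : ℕ) = (x : ℕ) := by
    intro x hx
    rw [hs]
    rw [Equiv.swap_apply_of_ne_of_ne
      (fun h => by rw [h, he0v] at hx; omega)
      (fun h => by rw [h, he1v] at hx; omega)]
  refine ⟨F, ?_, ?_⟩
  · intro x y hxy
    have hxy' : (x : ℕ) < (y : ℕ) := hxy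
    apply Fin.lt_def.mpr
    rcases Nat.lt_or_ge (x : ℕ) 2 with hx | hx
    · rcases Nat.lt_or_ge (y : ℕ) 2 with hy | hy
      · have hx0 : (x : ℕ) = 0 := by omega
        have hy1 : (y : ℕ) = 1 := by omega
        rw [hF0 x hx0, hF1 y hy1]
        exact hcd'
      · rcases Nat.eq_or_lt_of_le (Nat.zero_le (x : ℕ)) with hx0 | hx1
        · rw [hF0 x hx0.symm]
          exact lt_trans hcd' (hposF2 y hy)
        · have : (x : ℕ) = 1 := by omega
          rw [hF1 x this]
          exact hposF2 y hy
    · have hy : 2 ≤ (y : ℕ) := by omega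
      rw [hF2 x hx, hF2 y hy]
      exact g.strictMono (Fin.mk_lt_mk.mpr (by omega))
  · intro a b
    rw [Fin.lt_def]
    rcases Nat.lt_or_ge (a : ℕ) 2 with ha | ha <;> rcases Nat.lt_or_ge (b : ℕ) 2 with hb | hb
    · rcases Nat.eq_or_lt_of_le (Nat.zero_le (a : ℕ)) with ha0 | ha1 <;>
        rcases Nat.eq_or_lt_of_le (Nat.zero_le (b : ℕ)) with hb0 | hb1
      · rw [hsval0 a ha0.symm, hsval0 b hb0.symm, hF0 a ha0.symm, hF0 b hb0.symm]
        exact iff_of_false (by omega) (lt_irrefl _)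
      · have hb1' : (b : ℕ) = 1 := by omega
        rw [hsval0 a ha0.symm, hsval1 b hb1', hF0 a ha0.symm, hF1 b hb1']
        exact iff_of_false (by omega) (fun h => by have := Fin.lt_def.mp h; omega)
      · have ha1' : (a : ℕ) = 1 := by omega
        rw [hsval1 a ha1', hsval0 b hb0.symm, hF1 a ha1', hF0 b hb0.symm]
        exact iff_of_true (by omega) (Fin.lt_def.mpr hvc)
      · have ha1' : (a : ℕ) = 1 := by omega
        have hb1' : (b : ℕ) = 1 := by omega
        rw [hsval1 a ha1', hsval1 b hb1', hF1 a ha1', hF1 b hb1']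
        exact iff_of_false (by omega) (lt_irrefl _)
    · rw [hsval2 b hb]
      rcases Nat.eq_or_lt_of_le (Nat.zero_le (a : ℕ)) with ha0 | ha1
      · rw [hsval0 a ha0.symm, hF0 a ha0.symm]
        exact iff_of_true (by omega) (Fin.lt_def.mpr (hvF2 b hb))
      · have ha1' : (a : ℕ) = 1 := by omega
        rw [hsval1 a ha1', hF1 a ha1']
        exact iff_of_true (by omega) (Fin.lt_def.mpr (hdF2 b hb))
    · rw [hsval2 a ha]
      rcases Nat.eq_or_lt_of_le (Nat.zero_le (b : ℕ)) with hb0 | hb1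
      · rw [hsval0 b hb0.symm, hF0 b hb0.symm]
        refine iff_of_false (by omega) (fun h => ?_)
        have h' := Fin.lt_def.mp h
        have := hvF2 a ha
        omega
      · have hb1' : (b : ℕ) = 1 := by omega
        rw [hsval1 b hb1', hF1 b hb1']
        refine iff_of_false (by omega) (fun h => ?_)
        have h' := Fin.lt_def.mp h
        have := hdF2 a ha
        omega
    · rw [hsval2 a ha, hsval2 b hb]
      rw [Fin.lt_def]
      exact (hF2mono' a b ha hb).symm

lemma inversion_of_contains {n : ℕ} (π : Equiv.Perm (Fin n)) {k : ℕ} (hk : 3 ≤ k)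
    (h : Contains π (Equiv.swap (⟨0, by linarith⟩ : Fin k) ⟨1, by linarith⟩)) :
    ∃ c d : Fin n, c < d ∧ π d < π c ∧ k - 2 ≤ (Tset π c d).card := by
  obtain ⟨f, hmono, hiff⟩ := h
  set e0 : Fin k := ⟨0, by omega⟩ with he0
  set e1 : Fin k := ⟨1, by omega⟩ with he1
  have he0v : (e0 : ℕ) = 0 := rfl
  have he1v : (e1 : ℕ) = 1 := rfl
  set s := Equiv.swap e0 e1 with hs
  have hs0 : s e0 = e1 := Equiv.swap_apply_left _ _
  have hs1 : s e1 = e0 := Equiv.swap_apply_right _ _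
  have h01 : e0 < e1 := Fin.lt_def.mpr (by omega)
  refine ⟨f e0, f e1, hmono h01, ?_, ?_⟩
  · have := (hiff e1 e0).mp (by rw [hs0, hs1]; exact h01)
    exact this
  · have hmap : ∀ a : Fin (k - 2),
        f ⟨(a : ℕ) + 2, by have := a.isLt; omega⟩ ∈ Tset π (f e0) (f e1) := by
      intro a
      set x : Fin k := ⟨(a : ℕ) + 2, by have := a.isLt; omega⟩ with hx
      have hxv : (x : ℕ) = (a : ℕ) + 2 := rfl
      have hsx : s x = x := Equiv.swap_apply_of_ne_of_ne
        (fun hh => by have := congrArg Fin.val hh; omega)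
        (fun hh => by have := congrArg Fin.val hh; omega)
      simp only [Tset, Finset.mem_filter, Finset.mem_univ, true_and]
      constructor
      · exact hmono (Fin.lt_def.mpr (by omega))
      · refine (hiff e0 x).mp ?_
        rw [hs0, hsx]
        exact Fin.lt_def.mpr (by omega)
    have hinj : Set.InjOn (fun a : Fin (k - 2) => f ⟨(a : ℕ) + 2, by have := a.isLt; omega⟩)
        ↑(Finset.univ : Finset (Fin (k - 2))) := by
      intro x _ y _ hxy
      have := hmono.injective hxy
      have hval : (x : ℕ) + 2 = (y : ℕ) + 2 := congrArg Fin.val this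
      exact Fin.ext (by omega)
    have hcard := Finset.card_le_card_of_injOn _ (fun a _ => hmap a) hinj
    simpa using hcard

/-- A Schröder permutation `π ∈ S_n` avoids the pattern `213⋯k` (for `k ≥ 3`) iff every
element `(i,j)` of its essential set satisfies `i + j ≥ n + 3 - k + ρ(i,j)` (written
in subtraction-free form; `(p.1+1, p.2+1)` are the 1-based coordinates). -/
theorem avoids_213k_iff (n k : ℕ) (hk : 3 ≤ k) (π : Equiv.Perm (Fin n))
    (hπ : Schroeder π) :
    Avoids π (Equiv.swap (⟨0, by omega⟩ : Fin k) ⟨1, by omega⟩) ↔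
      ∀ p ∈ EssSet π,
        n + 3 + rank π p ≤ ((p.1 : ℕ) + 1) + ((p.2 : ℕ) + 1) + k := by
  constructor
  · intro hAv p hp
    by_contra hcon
    push_neg at hcon
    have hid := SE_rank π p
    have hkSE : k ≤ (SEset π p.1 p.2).card := by omega
    obtain ⟨c, d, h1, h2, h3⟩ := inversion_of_essential π p hp
    exact hAv (contains_of_inversion hπ hk h1 h2 (by omega))
  · intro h hC
    obtain ⟨c, d, h1, h2, h3⟩ := inversion_of_contains π hk hC
    obtain ⟨q, hq, hSE⟩ := essential_of_inversion π h1 h2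
    have hle := h q hq
    have hid := SE_rank π q
    omega
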